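/- For any graph G with vertex set V, the assignment sending a finite set S to Conf_S^sink(G,V) ⊆ G^S and a morphism (f,g): S → T of FI_V to the map (f,g)_*: Conf_S^sink(G,V) → Conf_T^sink(G,V), defined by (f,g)_*(x)_j = x_{f⁻¹(j)} if j ∈ im(f) and g(j) otherwise, is functorial: it is well-defined (lands in the sink configuration space), continuous, and respects composition and identities. -/

import Mathlib

/-! STATEMENT 12: For a graph `G` with vertex set `V ⊆ G`, the assignment sending a
finite set `S` to `Conf_S^sink(G,V) ⊆ G^S` and an `FI_V`-morphism `(f,g) : S → T` to
the pushforward `(f,g)_* (x)_j = x_{f⁻¹(j)}` if `j ∈ im f` and `g(j)` otherwise, is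
functorial: the pushforward lands in the sink configuration space, is continuous, and
respects composition and identities. -/

/-- A morphism `(f,g) : S → T` of `FI_V`. -/
structure FIVHom (V : Type*) (S T : Type*) where
  f : S → T
  inj : Function.Injective f
  g : ∀ t : T, t ∉ Set.range f → V

/-- The identity morphism of `FI_V`. -/
def FIVHom.id (V S : Type*) : FIVHom V S S where
  f := fun s => s
  inj := fun _ _ h => h
  g := fun t ht => absurd ⟨t, rfl⟩ ht

attribute [local instance] Classical.propDecidable

/-- Composition in `FI_V`. -/
noncomputable def FIVHom.comp {V R S T : Type*} (p : FIVHom V S T) (q : FIVHom V R S) :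
    FIVHom V R T where
  f := p.f ∘ q.f
  inj := p.inj.comp q.inj
  g := fun t ht =>
    if h : ∃ s, p.f s = t then
      q.g h.choose (fun hs => by
        obtain ⟨r, hr⟩ := hs
        exact ht ⟨r, by simp [Function.comp_apply, hr, h.choose_spec]⟩)
    else
      p.g t (fun hs => h (by obtain ⟨s, hs'⟩ := hs; exact ⟨s, hs'⟩))

/-- The sink configuration space: tuples of points of `G` indexed by `S` which may only
collide on the vertex set `Vs`. -/
def sinkConf (G : Type*) (Vs : Set G) (S : Type*) : Set (S → G) :=
  {x | ∀ i j : S, i ≠ j → x i = x j → x i ∈ Vs}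

/-- The pushforward along an `FI_V`-morphism `(f,g)`: coordinate `t` is `x_{f⁻¹(t)}` if
`t ∈ im f`, and the vertex `g(t)` otherwise. -/
noncomputable def confPush {G : Type*} {Vs : Set G} {S T : Type*}
    (p : FIVHom (↥Vs) S T) (x : S → G) : T → G := fun t =>
  if h : ∃ s, p.f s = t then x h.choose else ↑(p.g t (fun hs => h hs))

/-- Functoriality of the sink configuration space with respect to `FI_V`. -/
theorem sinkConf_functorial (G : Type*) [TopologicalSpace G] (Vs : Set G) :
    -- well-defined: the pushforward lands in the sink configuration space
    (∀ (S T : Type) (p : FIVHom (↥Vs) S T) (x : S → G),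
      x ∈ sinkConf G Vs S → confPush p x ∈ sinkConf G Vs T) ∧
    -- continuity of the induced map on the sink configuration spaces
    (∀ (S T : Type) (p : FIVHom (↥Vs) S T),
      Continuous (fun x : sinkConf G Vs S => confPush p (x : S → G))) ∧
    -- respects composition
    (∀ (R S T : Type) (p : FIVHom (↥Vs) S T) (q : FIVHom (↥Vs) R S) (x : R → G),
      confPush (p.comp q) x = confPush p (confPush q x)) ∧
    -- respects identities
    (∀ (S : Type) (x : S → G), confPush (FIVHom.id (↥Vs) S) x = x) := by
  refine ⟨?_, ?_, ?_, ?_⟩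
  · intro S T p x hx i j hij heq
    simp only [confPush] at heq ⊢
    by_cases hi : ∃ s, p.f s = i
    · by_cases hj : ∃ s, p.f s = j
      · rw [dif_pos hi] at heq ⊢
        rw [dif_pos hj] at heq
        refine hx _ _ (fun h => hij ?_) heq
        rw [← hi.choose_spec, ← hj.choose_spec, h]
      · rw [dif_pos hi] at heq ⊢
        rw [dif_neg hj] at heq
        rw [heq]; exact (p.g j _).2
    · rw [dif_neg hi]
      exact (p.g i _).2
  · intro S T p
    apply continuous_pi
    intro t
    simp only [confPush]
    by_cases h : ∃ s, p.f s = t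
    · simp only [dif_pos h]
      exact (continuous_apply h.choose).comp continuous_subtype_val
    · simp only [dif_neg h]
      exact continuous_const
  · intro R S T p q x
    funext t
    simp only [confPush, FIVHom.comp]
    by_cases h : ∃ r, p.f (q.f r) = t
    · have h' : ∃ s, p.f s = t := ⟨q.f h.choose, h.choose_spec⟩
      have h0 : ∃ r, (p.f ∘ q.f) r = t := h
      erw [dif_pos h0, dif_pos h']
      have he : h'.choose = q.f h0.choose := p.inj (h'.choose_spec.trans h0.choose_spec.symm)
      rw [he]
      have hq : ∃ r, q.f r = q.f h0.choose := ⟨h0.choose, rfl⟩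
      rw [dif_pos hq]
      congr 1
      exact (q.inj hq.choose_spec).symm
    · have h0 : ¬ ∃ r, (p.f ∘ q.f) r = t := h
      erw [dif_neg h0]
      by_cases h' : ∃ s, p.f s = t
      · rw [dif_pos h', dif_pos h']
        have hq : ¬ ∃ r, q.f r = h'.choose := by
          rintro ⟨r, hr⟩
          exact h ⟨r, by rw [hr, h'.choose_spec]⟩
        rw [dif_neg hq]
      · rw [dif_neg h', dif_neg h']
  · intro S x
    funext t
    have h : ∃ s, (FIVHom.id (↥Vs) S).f s = t := ⟨t, rfl⟩
    rw [confPush, dif_pos h, show h.choose = t from h.choose_spec]
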